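/- arXiv:2206.07590 — 2 statements merged into one kernel-verified Lean document; each statement's English description precedes it below -/
import Mathlib

section
/- For every integer m ≥ 0 and every x, x · Σ_{k=0}^{m} C(2m+1, 2k+1) (-1)^k P_{2m-2k}(x) − Σ_{k=0}^{m} C(2m+1, 2k) (-1)^k P_{2m-2k+1}(x) = (-1)^{m+1}, where C(m,j) denotes the binomial coefficient. -/
open Polynomial Finset

/-- The derivative polynomials for tangent: `P 0 = X`,
`P (n+1) = (1 + X^2) * (P n)'`. -/
noncomputable def P : ℕ → Polynomial ℚ
  | 0 => X
  | n + 1 => (1 + X ^ 2) * derivative (P n)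

/-- The derivative polynomials for secant: `Q 0 = 1`,
`Q (n+1) = (1 + X^2) * (Q n)' + X * Q n`. -/
noncomputable def Q : ℕ → Polynomial ℚ
  | 0 => 1
  | n + 1 => (1 + X ^ 2) * derivative (Q n) + X * Q n

noncomputable def M (n : ℕ) : Polynomial ℂ := (P n).map (algebraMap ℚ ℂ)
noncomputable def N (n : ℕ) : Polynomial ℂ := (Q n).map (algebraMap ℚ ℂ)

lemma M_succ (n : ℕ) : M (n+1) = (1 + X ^ 2) * derivative (M n) := by
  simp [M, P, Polynomial.derivative_map]

lemma N_succ (n : ℕ) : N (n+1) = (1 + X ^ 2) * derivative (N n) + X * N n := by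
  simp [N, Q, Polynomial.derivative_map]

lemma key (n : ℕ) :
    ∑ k ∈ Finset.range (n+1), C ((n.choose k : ℂ) * Complex.I ^ k) * M (n - k) =
    (X + C Complex.I) * N n - C (Complex.I ^ (n+1)) := by
  induction n with
  | zero => simp [M, N, P, Q]
  | succ n ih =>
    have step : ∑ k ∈ Finset.range (n+2),
        C (((n+1).choose k : ℂ) * Complex.I ^ k) * M (n + 1 - k) =
        (1 + X ^ 2) * derivative (∑ k ∈ Finset.range (n+1),
          C ((n.choose k : ℂ) * Complex.I ^ k) * M (n - k)) +
        C Complex.I * ∑ k ∈ Finset.range (n+1),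
          C ((n.choose k : ℂ) * Complex.I ^ k) * M (n - k) := by
      rw [Finset.sum_range_succ' (fun k => C (((n+1).choose k : ℂ) * Complex.I ^ k) * M (n + 1 - k))]
      have h1 : ∀ k ∈ Finset.range (n+1),
          C (((n+1).choose (k+1) : ℂ) * Complex.I ^ (k+1)) * M (n + 1 - (k+1)) =
          C ((n.choose (k+1) : ℂ) * Complex.I ^ (k+1)) * M (n - (k+1) + 1) +
          C Complex.I * (C ((n.choose k : ℂ) * Complex.I ^ k) * M (n - k)) := by
        intro k hk
        simp only [Finset.mem_range] at hk
        have hsub : n + 1 - (k + 1) = n - k := by omega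
        rw [hsub, Nat.choose_succ_succ]
        by_cases hkn : k = n
        · subst hkn
          simp [Nat.choose_succ_self, pow_succ]
          ring
        · have : n - (k+1) + 1 = n - k := by omega
          rw [this]
          push_cast
          simp [pow_succ]
          ring
      rw [Finset.sum_congr rfl h1, Finset.sum_add_distrib, ← Finset.mul_sum]
      have h2 : C (((n+1).choose 0 : ℂ) * Complex.I ^ 0) * M (n + 1 - 0) =
          C ((n.choose 0 : ℂ) * Complex.I ^ 0) * M (n - 0 + 1) := by
        simp
      rw [h2]
      have h3 : (∑ k ∈ Finset.range (n+1),
            C ((n.choose (k+1) : ℂ) * Complex.I ^ (k+1)) * M (n - (k+1) + 1)) +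
            C ((n.choose 0 : ℂ) * Complex.I ^ 0) * M (n - 0 + 1) =
          ∑ k ∈ Finset.range (n+2),
            C ((n.choose k : ℂ) * Complex.I ^ k) * M (n - k + 1) := by
        rw [Finset.sum_range_succ' (fun k => C ((n.choose k : ℂ) * Complex.I ^ k) * M (n - k + 1))]
      rw [add_right_comm, h3, Finset.sum_range_succ]
      have h4 : (n.choose (n+1) : ℂ) = 0 := by simp
      rw [h4]
      simp only [zero_mul, map_zero]
      have h5 : ∑ k ∈ Finset.range (n+1),
          C ((n.choose k : ℂ) * Complex.I ^ k) * M (n - k + 1) =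
          (1 + X ^ 2) * derivative (∑ k ∈ Finset.range (n+1),
            C ((n.choose k : ℂ) * Complex.I ^ k) * M (n - k)) := by
        rw [derivative_sum, Finset.mul_sum]
        refine Finset.sum_congr rfl fun k hk => ?_
        rw [M_succ]
        rw [derivative_C_mul]
        ring
      rw [h5]
      ring
    rw [step, ih, N_succ]
    have : derivative ((X + C Complex.I) * N n - C (Complex.I ^ (n + 1))) =
        N n + (X + C Complex.I) * derivative (N n) := by
      simp [derivative_mul, derivative_pow]
    rw [this]
    have hI : (C (Complex.I ^ (n + 1 + 1)) : Polynomial ℂ) =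
        C Complex.I * C (Complex.I ^ (n + 1)) := by
      rw [← C_mul, ← pow_succ']
    rw [hI]
    have hCsq : (C Complex.I : Polynomial ℂ) * C Complex.I = -1 := by
      rw [← C_mul, Complex.I_mul_I]; simp
    linear_combination (N n) * hCsq

lemma sum_range_even_odd {α : Type*} [AddCommMonoid α] (f : ℕ → α) (n : ℕ) :
    ∑ j ∈ Finset.range (2*n), f j =
      (∑ k ∈ Finset.range n, f (2*k)) + ∑ k ∈ Finset.range n, f (2*k+1) := by
  induction n with
  | zero => simp
  | succ n ih =>
    have : 2 * (n+1) = (2*n) + 1 + 1 := by ring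
    rw [this, Finset.sum_range_succ, Finset.sum_range_succ, ih,
      Finset.sum_range_succ, Finset.sum_range_succ]
    abel

theorem P_odd_alternating_identity (m : ℕ) (x : ℚ) :
    x * (∑ k ∈ Finset.range (m + 1),
        ((2 * m + 1).choose (2 * k + 1) : ℚ) * (-1) ^ k * (P (2 * m - 2 * k)).eval x) -
      (∑ k ∈ Finset.range (m + 1),
        ((2 * m + 1).choose (2 * k) : ℚ) * (-1) ^ k * (P (2 * m - 2 * k + 1)).eval x) =
    (-1) ^ (m + 1) := by
  set n := 2 * m + 1 with hn
  have hkey := key n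
  have hev := congrArg (Polynomial.eval ((x : ℂ))) hkey
  -- eval of M, N
  have hMeval : ∀ j, (M j).eval (x : ℂ) = (((P j).eval x : ℚ) : ℂ) := by
    intro j
    rw [show M j = (P j).map (algebraMap ℚ ℂ) from rfl, Polynomial.eval_map,
      show ((x : ℂ)) = algebraMap ℚ ℂ x from (eq_ratCast _ x).symm,
      Polynomial.eval₂_at_apply, eq_ratCast]
  have hNeval : (N n).eval (x : ℂ) = (((Q n).eval x : ℚ) : ℂ) := by
    rw [show N n = (Q n).map (algebraMap ℚ ℂ) from rfl, Polynomial.eval_map,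
      show ((x : ℂ)) = algebraMap ℚ ℂ x from (eq_ratCast _ x).symm,
      Polynomial.eval₂_at_apply, eq_ratCast]
  simp only [Polynomial.eval_sub, Polynomial.eval_mul, Polynomial.eval_add,
    Polynomial.eval_finset_sum, Polynomial.eval_C, Polynomial.eval_X] at hev
  rw [hNeval] at hev
  have hsplit : ∑ k ∈ Finset.range (n+1),
      ((n.choose k : ℂ) * Complex.I ^ k) * (M (n - k)).eval (x : ℂ) =
      (∑ k ∈ Finset.range (m+1), ((n.choose (2*k) : ℂ) * Complex.I ^ (2*k)) * (M (n - 2*k)).eval (x:ℂ))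
      + ∑ k ∈ Finset.range (m+1), ((n.choose (2*k+1) : ℂ) * Complex.I ^ (2*k+1)) * (M (n - (2*k+1))).eval (x:ℂ) := by
    have h2 : n + 1 = 2 * (m+1) := by omega
    rw [h2, sum_range_even_odd]
  rw [hsplit] at hev
  set S1 : ℚ := ∑ k ∈ Finset.range (m + 1),
      ((2 * m + 1).choose (2 * k + 1) : ℚ) * (-1) ^ k * (P (2 * m - 2 * k)).eval x with hS1
  set S2 : ℚ := ∑ k ∈ Finset.range (m + 1),
      ((2 * m + 1).choose (2 * k) : ℚ) * (-1) ^ k * (P (2 * m - 2 * k + 1)).eval x with hS2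
  have hevterm : ∑ k ∈ Finset.range (m+1), ((n.choose (2*k) : ℂ) * Complex.I ^ (2*k)) * (M (n - 2*k)).eval (x:ℂ) = (S2 : ℂ) := by
    rw [hS2]
    push_cast
    refine Finset.sum_congr rfl fun k hk => ?_
    simp only [Finset.mem_range] at hk
    have h1 : n - 2*k = 2*m - 2*k + 1 := by omega
    rw [h1, hMeval, pow_mul, Complex.I_sq]
  have hodterm : ∑ k ∈ Finset.range (m+1), ((n.choose (2*k+1) : ℂ) * Complex.I ^ (2*k+1)) * (M (n - (2*k+1))).eval (x:ℂ) = Complex.I * (S1 : ℂ) := by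
    rw [hS1]
    push_cast
    rw [Finset.mul_sum]
    refine Finset.sum_congr rfl fun k hk => ?_
    simp only [Finset.mem_range] at hk
    have h1 : n - (2*k+1) = 2*m - 2*k := by omega
    rw [h1, hMeval, pow_succ, pow_mul, Complex.I_sq]
    ring
  rw [hevterm, hodterm] at hev
  have hIpow : Complex.I ^ (n + 1) = (-1 : ℂ) ^ (m+1) := by
    have : n + 1 = 2 * (m+1) := by omega
    rw [this, pow_mul, Complex.I_sq]
  rw [hIpow] at hev
  -- now hev : (S2:ℂ) + I*(S1:ℂ) = ((x:ℂ) + I) * ((Q n).eval x : ℂ) - (-1)^(m+1)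
  set q : ℚ := (Q n).eval x with hq
  have him2 : ((-1:ℂ)^(m+1)).im = 0 := by
    rw [show ((-1:ℂ)) = ((-1:ℝ):ℂ) from by norm_num, ← Complex.ofReal_pow, Complex.ofReal_im]
  have hre2 : ((-1:ℂ)^(m+1)).re = (-1:ℝ)^(m+1) := by
    rw [show ((-1:ℂ)) = ((-1:ℝ):ℂ) from by norm_num, ← Complex.ofReal_pow, Complex.ofReal_re]
  have him := congrArg Complex.im hev
  have hre := congrArg Complex.re hev
  simp [Complex.add_im, Complex.mul_im, Complex.add_re, Complex.mul_re, him2, hre2] at him hre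
  -- him : (S1 : ℝ) = (q : ℝ), hre : (S2:ℝ) = x*q - (-1)^(m+1)
  have him' : S1 = q := by exact_mod_cast him
  have hre' : S2 = x * q - (-1)^(m+1) := by exact_mod_cast hre
  rw [him', hre']
  ring
end

section
/- For every integer n ≥ 0, (2n+1) · 2^{2n} · E_{2n} = s_{2n+1} + Σ_{i=0}^{n-1} C(2n+1, 2i+2) (-1)^{i+2} (4^{i+1} − 2) B_{2i+2} s_{2n-2i-1}, where C(m,j) denotes the binomial coefficient and B_j denotes the j-th Bernoulli number. -/
open Polynomial Finset

/-- The Euler numbers: `E (2j) = Q (2j) (0)` (secant numbers) and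
`E (2j+1) = P (2j+1) (0)` (tangent numbers). -/
noncomputable def E (n : ℕ) : ℚ := if Even n then (Q n).eval 0 else (P n).eval 0

/-- The Springer numbers `s n = Q n (1)`. -/
noncomputable def s (n : ℕ) : ℚ := (Q n).eval 1

/-! ### Auxiliary material -/

/-- companion sequence: the polynomials `(-1)^(n/2)` resp. `(-1)^(n/2+1) X`,
satisfying the "adjoint" recurrence. -/
noncomputable def u : ℕ → Polynomial ℚ
  | 0 => 1
  | n + 1 => (1 + X ^ 2) * derivative (u n) - X * u n

noncomputable def Dop (p : Polynomial ℚ) : Polynomial ℚ := (1 + X ^ 2) * derivative p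

lemma Q_succ (n : ℕ) : Q (n + 1) = Dop (Q n) + X * Q n := rfl
lemma u_succ (n : ℕ) : u (n + 1) = Dop (u n) - X * u n := rfl

lemma Dop_mul (p q : Polynomial ℚ) : Dop (p * q) = Dop p * q + p * Dop q := by
  simp only [Dop, derivative_mul]; ring

noncomputable def Asum (n : ℕ) : Polynomial ℚ :=
  ∑ k ∈ range (n + 1), (n.choose k : Polynomial ℚ) * Q k * u (n - k)

lemma Asum_succ (n : ℕ) : Asum (n + 1) = Dop (Asum n) := by
  have key : Asum (n + 1) =
      (∑ k ∈ range (n + 1), (n.choose k : Polynomial ℚ) * Q (k + 1) * u (n - k)) +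
      (∑ k ∈ range (n + 1), (n.choose k : Polynomial ℚ) * Q k * u (n + 1 - k)) := by
    have h1 : Asum (n + 1) =
        (∑ k ∈ range (n + 1),
          ((n.choose k : Polynomial ℚ) + (n.choose (k + 1) : Polynomial ℚ)) * Q (k + 1) * u (n - k))
          + u (n + 1) := by
      rw [Asum, Finset.sum_range_succ']
      congr 1
      · refine Finset.sum_congr rfl fun k _ => ?_
        rw [Nat.succ_sub_succ, Nat.choose_succ_succ]
        push_cast
        ring
      · simp [Q]
    have h2 : (∑ k ∈ range (n + 1), (n.choose (k + 1) : Polynomial ℚ) * Q (k + 1) * u (n - k))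
        = (∑ k ∈ range (n + 1), (n.choose k : Polynomial ℚ) * Q k * u (n + 1 - k)) - u (n + 1) := by
      have h3 : (∑ k ∈ range (n + 2), (n.choose k : Polynomial ℚ) * Q k * u (n + 1 - k))
          = (∑ k ∈ range (n + 1), (n.choose (k + 1) : Polynomial ℚ) * Q (k + 1) * u (n - k))
            + u (n + 1) := by
        rw [Finset.sum_range_succ']
        congr 1
        · refine Finset.sum_congr rfl fun k _ => ?_
          rw [Nat.succ_sub_succ]
        · simp [Q]
      have h4 : (∑ k ∈ range (n + 2), (n.choose k : Polynomial ℚ) * Q k * u (n + 1 - k))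
          = (∑ k ∈ range (n + 1), (n.choose k : Polynomial ℚ) * Q k * u (n + 1 - k)) := by
        rw [Finset.sum_range_succ, Nat.choose_succ_self]
        simp
      rw [← h4, h3]; ring
    rw [h1]
    simp only [add_mul, Finset.sum_add_distrib, h2]
    ring
  rw [key]
  have step : ∀ k ∈ range (n + 1),
      (n.choose k : Polynomial ℚ) * Q (k + 1) * u (n - k)
        + (n.choose k : Polynomial ℚ) * Q k * u (n + 1 - k)
      = Dop ((n.choose k : Polynomial ℚ) * Q k * u (n - k)) := by
    intro k hk
    have hk' : k ≤ n := Nat.lt_succ_iff.mp (Finset.mem_range.mp hk)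
    have hsub : n + 1 - k = (n - k) + 1 := by omega
    rw [hsub, u_succ, Q_succ]
    have : Dop ((n.choose k : Polynomial ℚ) * Q k * u (n - k))
        = (n.choose k : Polynomial ℚ) * (Dop (Q k) * u (n - k) + Q k * Dop (u (n - k))) := by
      simp only [Dop, derivative_mul, Polynomial.derivative_natCast]
      ring
    rw [this]
    ring
  rw [← Finset.sum_add_distrib, Finset.sum_congr rfl step, Asum]
  simp only [Dop, derivative_sum, Finset.mul_sum]

lemma Asum_zero : Asum 0 = 1 := by simp [Asum, Q, u]

lemma Asum_succ_eq (n : ℕ) : Asum (n + 1) = 0 := by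
  induction n with
  | zero => rw [Asum_succ, Asum_zero]; simp [Dop]
  | succ n ih => rw [Asum_succ, ih]; simp [Dop]

lemma Asum_eval (t : ℚ) (n : ℕ) :
    ∑ k ∈ range (n + 1), (n.choose k : ℚ) * (Q k).eval t * (u (n - k)).eval t
      = if n = 0 then 1 else 0 := by
  have h : (Asum n).eval t = if n = 0 then 1 else 0 := by
    cases n with
    | zero => rw [Asum_zero]; simp
    | succ n => rw [Asum_succ_eq]; simp
  rw [← h, Asum, Polynomial.eval_finset_sum]
  refine Finset.sum_congr rfl fun k _ => ?_
  simp

lemma u_spec (k : ℕ) :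
    u (2 * k) = C ((-1 : ℚ) ^ k) ∧ u (2 * k + 1) = C ((-1 : ℚ) ^ (k + 1)) * X := by
  induction k with
  | zero =>
    constructor
    · show u 0 = _; simp [u]
    · show u 1 = _
      show (1 + X ^ 2) * derivative (u 0) - X * u 0 = _
      simp [u]
  | succ k ih =>
    obtain ⟨h1, h2⟩ := ih
    have he : 2 * (k + 1) = (2 * k + 1) + 1 := by ring
    have h3 : u (2 * (k + 1)) = C ((-1 : ℚ) ^ (k + 1)) := by
      rw [he]
      show (1 + X ^ 2) * derivative (u (2 * k + 1)) - X * u (2 * k + 1) = _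
      rw [h2]
      simp only [derivative_C_mul, derivative_X, mul_one]
      ring
    refine ⟨h3, ?_⟩
    show (1 + X ^ 2) * derivative (u (2 * (k + 1))) - X * u (2 * (k + 1)) = _
    rw [h3]
    simp only [derivative_C]
    rw [show ((-1 : ℚ)) ^ (k + 1 + 1) = -((-1) ^ (k + 1)) from by ring, map_neg]
    ring

/-- coefficients of cosine (times n!) -/
noncomputable def qcc (n : ℕ) : ℚ := if Even n then (-1) ^ (n / 2) else 0
/-- coefficients of sine (times n!) -/
noncomputable def qss (n : ℕ) : ℚ := if Even n then 0 else (-1) ^ (n / 2)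
/-- coefficients of z/sin z (times n!) -/
noncomputable def qcsc (n : ℕ) : ℚ :=
  if n = 0 then 1
  else if Even n then (-1) ^ (n / 2 - 1) * (4 ^ (n / 2) - 2) * _root_.bernoulli n else 0

lemma qcc_even (a : ℕ) : qcc (2 * a) = (-1) ^ a := by
  rw [qcc, if_pos ⟨a, by ring⟩, Nat.mul_div_cancel_left a (by norm_num)]
lemma qcc_odd (a : ℕ) : qcc (2 * a + 1) = 0 := by
  rw [qcc, if_neg (by simp [Nat.even_add_one, Nat.even_mul])]
lemma qss_even (a : ℕ) : qss (2 * a) = 0 := by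
  rw [qss, if_pos ⟨a, by ring⟩]
lemma qss_odd (a : ℕ) : qss (2 * a + 1) = (-1) ^ a := by
  rw [qss, if_neg (by simp [Nat.even_add_one, Nat.even_mul]),
    show (2 * a + 1) / 2 = a from by omega]
lemma qcsc_odd (k : ℕ) (h : Odd k) : qcsc k = 0 := by
  have h0 : k ≠ 0 := by rintro rfl; simp at h
  rw [qcsc, if_neg h0, if_neg (by simpa using h)]
lemma qcsc_zero : qcsc 0 = 1 := rfl

lemma u_eval_one (m : ℕ) : (u m).eval 1 = qcc m - qss m := by
  rcases Nat.even_or_odd m with ⟨a, ha⟩ | ⟨a, ha⟩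
  · rw [show m = 2 * a from by omega, (u_spec a).1, qcc_even, qss_even]; simp
  · rw [show m = 2 * a + 1 from by omega, (u_spec a).2, qcc_odd, qss_odd]
    simp [pow_succ]

lemma u_eval_zero (m : ℕ) : (u m).eval 0 = qcc m := by
  rcases Nat.even_or_odd m with ⟨a, ha⟩ | ⟨a, ha⟩
  · rw [show m = 2 * a from by omega, (u_spec a).1, qcc_even]; simp
  · rw [show m = 2 * a + 1 from by omega, (u_spec a).2, qcc_odd]; simp

/-- exponential generating function -/
noncomputable def egf (f : ℕ → ℚ) : PowerSeries ℚ :=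
  PowerSeries.mk fun n => f n / n.factorial

lemma coeff_egf (f : ℕ → ℚ) (n : ℕ) :
    PowerSeries.coeff n (egf f) = f n / n.factorial := by
  simp [egf]

lemma egf_mul_coeff (f g : ℕ → ℚ) (n : ℕ) :
    PowerSeries.coeff n (egf f * egf g) =
      (∑ k ∈ range (n + 1), (n.choose k : ℚ) * f k * g (n - k)) / n.factorial := by
  rw [PowerSeries.coeff_mul, Finset.Nat.sum_antidiagonal_eq_sum_range_succ_mk, Finset.sum_div]
  refine Finset.sum_congr rfl fun k hk => ?_
  simp only [coeff_egf]
  have hk' : k ≤ n := Nat.lt_succ_iff.mp (Finset.mem_range.mp hk)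
  have hfac : (n.factorial : ℚ) = (n.choose k : ℚ) * k.factorial * (n - k).factorial := by
    exact_mod_cast (Nat.choose_mul_factorial_mul_factorial hk').symm
  rw [hfac]
  have h1 : (k.factorial : ℚ) ≠ 0 := Nat.cast_ne_zero.mpr k.factorial_ne_zero
  have h2 : ((n - k).factorial : ℚ) ≠ 0 := Nat.cast_ne_zero.mpr (n - k).factorial_ne_zero
  have h3 : (n.choose k : ℚ) ≠ 0 := Nat.cast_ne_zero.mpr (Nat.choose_pos hk').ne'
  field_simp

lemma egf_mul_eq_one (f g : ℕ → ℚ)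
    (h : ∀ n, ∑ k ∈ range (n + 1), (n.choose k : ℚ) * f k * g (n - k)
        = if n = 0 then 1 else 0) :
    egf f * egf g = 1 := by
  ext n
  rw [egf_mul_coeff, h, PowerSeries.coeff_one]
  split_ifs with h0
  · subst h0; simp
  · simp

lemma rescale_egf (a : ℚ) (f : ℕ → ℚ) :
    PowerSeries.rescale a (egf f) = egf fun n => a ^ n * f n := by
  ext n
  rw [PowerSeries.coeff_rescale, coeff_egf, coeff_egf, mul_div_assoc]

lemma sum_odd_only (h : ℕ → ℚ) (h0 : ∀ k, Even k → h k = 0) (n : ℕ) :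
    ∑ k ∈ range (2 * n + 1), h k = ∑ i ∈ range n, h (2 * i + 1) := by
  induction n with
  | zero => simpa using h0 0 Even.zero
  | succ n ih =>
    rw [show 2 * (n + 1) + 1 = (2 * n + 1) + 1 + 1 from by ring, Finset.sum_range_succ,
      Finset.sum_range_succ, ih, Finset.sum_range_succ,
      h0 (2 * n + 1 + 1) (by refine ⟨n + 1, by ring⟩)]
    ring

/-! ### Bernoulli lemmas -/

lemma bernoulli_odd_zero {k : ℕ} (h : Odd k) (h1 : 1 < k) : _root_.bernoulli k = 0 := by
  rw [bernoulli_eq_bernoulli'_of_ne_one (by omega)]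
  exact bernoulli'_eq_zero_of_odd h h1

lemma bps_eq : bernoulliPowerSeries ℚ = egf _root_.bernoulli := by
  ext n
  simp [bernoulliPowerSeries, egf, div_eq_mul_inv]

lemma exp_eq : PowerSeries.exp ℚ = egf fun _ => 1 := by
  ext n
  simp [PowerSeries.coeff_exp, egf, div_eq_mul_inv]

lemma L1' (j : ℕ) :
    ∑ k ∈ range (2 * j + 4), ((2 * j + 3).choose k : ℚ) * _root_.bernoulli k = 0 := by
  have h := _root_.sum_bernoulli (2 * j + 3)
  rw [if_neg (by omega)] at h
  rw [show 2 * j + 4 = (2 * j + 3) + 1 from rfl, Finset.sum_range_succ, h,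
    bernoulli_odd_zero ⟨j + 1, by ring⟩ (by omega)]
  simp

lemma exp_ne_zero' : PowerSeries.exp ℚ ≠ 0 := fun h => by
  have := PowerSeries.constantCoeff_exp (A := ℚ)
  rw [h] at this
  simp at this

open PowerSeries in
lemma L2 (m : ℕ) :
    ∑ k ∈ range (2 * m + 2), ((2 * m + 1).choose k : ℚ) * 2 ^ k * _root_.bernoulli k = 0 := by
  set B := bernoulliPowerSeries ℚ with hBdef
  have key : (rescale (2 : ℚ) B) * (exp ℚ * exp ℚ - 1) = PowerSeries.C 2 * PowerSeries.X := by
    have e2 : rescale (2 : ℚ) (exp ℚ) = exp ℚ * exp ℚ := by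
      have := PowerSeries.exp_mul_exp_eq_exp_add (1 : ℚ) 1
      rw [PowerSeries.rescale_one] at this
      norm_num at this
      rw [this]
    have := congrArg (rescale (2 : ℚ)) (bernoulliPowerSeries_mul_exp_sub_one ℚ)
    rw [map_mul, map_sub, map_one, PowerSeries.rescale_X, e2] at this
    exact this
  have negB : rescale (-2 : ℚ) B = rescale (2 : ℚ) B + PowerSeries.C 2 * PowerSeries.X := by
    ext n
    rw [hBdef, map_add, bps_eq, PowerSeries.coeff_rescale, PowerSeries.coeff_rescale, coeff_egf,
      PowerSeries.coeff_C_mul, PowerSeries.coeff_X]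
    match n with
    | 0 => norm_num
    | 1 => norm_num
    | (n + 2) =>
      rw [if_neg (by omega)]
      rcases Nat.even_or_odd (n + 2) with he | ho
      · rw [he.neg_pow]
        ring
      · rw [bernoulli_odd_zero ho (by omega)]
        ring
  have eneg : exp ℚ * rescale (-1 : ℚ) (exp ℚ) = 1 := PowerSeries.exp_mul_exp_neg_eq_one
  set g := exp ℚ * rescale (2 : ℚ) B with hg
  have hrg : rescale (-1 : ℚ) g = rescale (-1 : ℚ) (exp ℚ) * rescale (-2 : ℚ) B := by
    rw [hg, map_mul, PowerSeries.rescale_rescale]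
    norm_num
  have hzero : exp ℚ * (g - rescale (-1 : ℚ) g) = 0 := by
    rw [hrg, hg, negB]
    calc exp ℚ * (exp ℚ * rescale (2:ℚ) B
          - rescale (-1:ℚ) (exp ℚ) * (rescale (2:ℚ) B + PowerSeries.C 2 * PowerSeries.X))
        = rescale (2:ℚ) B * (exp ℚ * exp ℚ)
          - (exp ℚ * rescale (-1:ℚ) (exp ℚ))
              * (rescale (2:ℚ) B + PowerSeries.C 2 * PowerSeries.X) := by
          ring
      _ = rescale (2:ℚ) B * (exp ℚ * exp ℚ - 1) - PowerSeries.C 2 * PowerSeries.X := by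
          rw [eneg]; ring
      _ = 0 := by rw [key]; ring
  have hgg : g = rescale (-1 : ℚ) g := by
    rcases mul_eq_zero.mp hzero with h | h
    · exact absurd h exp_ne_zero'
    · exact sub_eq_zero.mp h
  have hodd : PowerSeries.coeff (2 * m + 1) g = 0 := by
    have h1 : PowerSeries.coeff (2 * m + 1) (rescale (-1 : ℚ) g)
        = - PowerSeries.coeff (2 * m + 1) g := by
      rw [PowerSeries.coeff_rescale, Odd.neg_one_pow ⟨m, by ring⟩]
      ring
    have h2 := congrArg (PowerSeries.coeff (2 * m + 1)) hgg
    rw [h1] at h2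
    linarith
  have hgeq : g = egf (fun n => 2 ^ n * _root_.bernoulli n) * egf (fun _ => 1) := by
    rw [hg, hBdef, bps_eq, rescale_egf, exp_eq, mul_comm]
  rw [hgeq, egf_mul_coeff] at hodd
  have hfac : (((2 * m + 1).factorial : ℕ) : ℚ) ≠ 0 :=
    Nat.cast_ne_zero.mpr (Nat.factorial_ne_zero _)
  rw [_root_.div_eq_zero_iff] at hodd
  rcases hodd with h | h
  · rw [show 2 * m + 1 + 1 = 2 * m + 2 from rfl] at h
    rw [← h]
    refine Finset.sum_congr rfl fun k hk => ?_
    ring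
  · exact absurd h hfac

/-! ### The generating function identities -/

/-- the secant numbers -/
noncomputable def ee (n : ℕ) : ℚ := (Q n).eval 0

lemma F1 : egf s * egf (fun m => qcc m - qss m) = 1 := by
  apply egf_mul_eq_one
  intro n
  rw [← Asum_eval 1 n]
  refine Finset.sum_congr rfl fun k _ => ?_
  rw [u_eval_one]
  rfl

lemma F3 : egf ee * egf qcc = 1 := by
  apply egf_mul_eq_one
  intro n
  rw [← Asum_eval 0 n]
  refine Finset.sum_congr rfl fun k _ => ?_
  rw [u_eval_zero]
  rfl

lemma F2 : PowerSeries.rescale (-1 : ℚ) (egf s) * egf (fun m => qcc m + qss m) = 1 := by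
  have h := congrArg (PowerSeries.rescale (-1 : ℚ)) F1
  rw [map_mul, map_one] at h
  have h2 : PowerSeries.rescale (-1 : ℚ) (egf fun m => qcc m - qss m)
      = egf fun m => qcc m + qss m := by
    rw [rescale_egf]
    ext n
    rw [coeff_egf, coeff_egf]
    rcases Nat.even_or_odd n with ⟨a, ha⟩ | ⟨a, ha⟩
    · rw [show n = 2 * a from by omega, qcc_even, qss_even, Even.neg_one_pow ⟨a, by ring⟩]
      ring
    · rw [show n = 2 * a + 1 from by omega, qcc_odd, qss_odd,
        Odd.neg_one_pow (α := ℚ) ⟨a, by ring⟩]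
      ring
  rw [h2] at h
  exact h

lemma hBA : egf (fun m => qcc m + qss m) - egf (fun m => qcc m - qss m)
    = egf qss + egf qss := by
  ext n
  simp only [map_sub, map_add, coeff_egf]
  ring

lemma F4 : PowerSeries.rescale (2 : ℚ) (egf qcc)
    = egf (fun m => qcc m - qss m) * egf (fun m => qcc m + qss m) := by
  ext n
  rw [PowerSeries.coeff_rescale, coeff_egf, egf_mul_coeff, ← mul_div_assoc]
  congr 1
  rcases Nat.even_or_odd n with ⟨m, hm⟩ | ⟨m, hm⟩
  · have hn : n = 2 * m := by omega
    subst hn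
    have hterm : ∀ k ∈ range (2 * m + 1),
        ((2 * m).choose k : ℚ) * (qcc k - qss k) * (qcc (2 * m - k) + qss (2 * m - k))
          = ((2 * m).choose k : ℚ) * (-1) ^ m := by
      intro k hk
      have hk' : k ≤ 2 * m := Nat.lt_succ_iff.mp (Finset.mem_range.mp hk)
      rcases Nat.even_or_odd k with ⟨a, ha⟩ | ⟨a, ha⟩
      · have h1 : k = 2 * a := by omega
        have h2 : 2 * m - 2 * a = 2 * (m - a) := by omega
        have hsgn : (-1 : ℚ) ^ a * (-1 : ℚ) ^ (m - a) = (-1) ^ m := by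
          rw [← pow_add, show a + (m - a) = m from by omega]
        rw [h1, h2, qcc_even, qss_even, qcc_even, qss_even, ← hsgn]
        ring
      · have h1 : k = 2 * a + 1 := by omega
        have h2 : 2 * m - (2 * a + 1) = 2 * (m - a - 1) + 1 := by omega
        have hsgn : (-1 : ℚ) ^ a * (-1 : ℚ) ^ (m - a - 1) * (-1) = (-1) ^ m := by
          rw [← pow_add, show a + (m - a - 1) = m - 1 from by omega, ← pow_succ,
            show m - 1 + 1 = m from by omega]
        rw [h1, h2, qcc_odd, qss_odd, qcc_odd, qss_odd, ← hsgn]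
        ring
    have hch : (∑ k ∈ range (2 * m + 1), ((2 * m).choose k : ℚ)) = 2 ^ (2 * m) := by
      exact_mod_cast Nat.sum_range_choose (2 * m)
    rw [Finset.sum_congr rfl hterm, ← Finset.sum_mul, hch, qcc_even]
  · have hn : n = 2 * m + 1 := by omega
    subst hn
    have hterm : ∀ k ∈ range (2 * m + 1 + 1),
        ((2 * m + 1).choose k : ℚ) * (qcc k - qss k) * (qcc (2 * m + 1 - k) + qss (2 * m + 1 - k))
          = (-1) ^ m * ((-1) ^ k * ((2 * m + 1).choose k : ℚ)) := by
      intro k hk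
      have hk' : k ≤ 2 * m + 1 := Nat.lt_succ_iff.mp (Finset.mem_range.mp hk)
      rcases Nat.even_or_odd k with ⟨a, ha⟩ | ⟨a, ha⟩
      · have h1 : k = 2 * a := by omega
        have h2 : 2 * m + 1 - 2 * a = 2 * (m - a) + 1 := by omega
        have hpow : (-1 : ℚ) ^ (2 * a) = 1 := by rw [pow_mul]; norm_num
        have hsgn : (-1 : ℚ) ^ a * (-1 : ℚ) ^ (m - a) = (-1) ^ m := by
          rw [← pow_add, show a + (m - a) = m from by omega]
        rw [h1, h2, qcc_even, qss_even, qcc_odd, qss_odd, hpow, ← hsgn]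
        ring
      · have h1 : k = 2 * a + 1 := by omega
        have h2 : 2 * m + 1 - (2 * a + 1) = 2 * (m - a) := by omega
        have hpow : (-1 : ℚ) ^ (2 * a + 1) = -1 := by rw [pow_succ, pow_mul]; norm_num
        have hsgn : (-1 : ℚ) ^ a * (-1 : ℚ) ^ (m - a) = (-1) ^ m := by
          rw [← pow_add, show a + (m - a) = m from by omega]
        rw [h1, h2, qcc_odd, qss_odd, qcc_even, qss_even, hpow, ← hsgn]
        ring
    have halt := Int.alternating_sum_range_choose (n := 2 * m + 1)
    rw [if_neg (by omega)] at halt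
    have hch : (∑ k ∈ range (2 * m + 1 + 1), ((-1 : ℚ) ^ k * ((2 * m + 1).choose k : ℚ))) = 0 := by
      exact_mod_cast halt
    rw [Finset.sum_congr rfl hterm, ← Finset.mul_sum, hch, qcc_odd]
    ring

lemma F6 : egf qcsc * egf qss = PowerSeries.X := by
  ext n
  rw [egf_mul_coeff, PowerSeries.coeff_X]
  have main : (∑ k ∈ range (n + 1), (n.choose k : ℚ) * qcsc k * qss (n - k))
      = if n = 1 then 1 else 0 := by
    rcases Nat.even_or_odd n with ⟨m, hm⟩ | ⟨m, hm⟩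
    · have hn : n = 2 * m := by omega
      subst hn
      rw [if_neg (by omega)]
      apply Finset.sum_eq_zero
      intro k hk
      have hk' : k ≤ 2 * m := Nat.lt_succ_iff.mp (Finset.mem_range.mp hk)
      rcases Nat.even_or_odd k with ⟨a, ha⟩ | ho
      · rw [show 2 * m - k = 2 * (m - a) from by omega, qss_even]
        ring
      · rw [qcsc_odd k ho]
        ring
    · have hn : n = 2 * m + 1 := by omega
      subst hn
      match m with
      | 0 =>
        rw [if_pos rfl]
        rw [Finset.sum_range_succ, Finset.sum_range_succ, Finset.sum_range_zero,
          qcsc_odd 1 ⟨0, by ring⟩, qcsc_zero,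
          show (2 * 0 + 1 - 0) = 2 * 0 + 1 from rfl, qss_odd]
        norm_num
      | (j + 1) =>
        rw [if_neg (by omega)]
        have hterm : ∀ k ∈ range (2 * (j + 1) + 1 + 1),
            ((2 * (j + 1) + 1).choose k : ℚ) * qcsc k * qss (2 * (j + 1) + 1 - k)
              = (-1) ^ j * (((2 * (j + 1) + 1).choose k : ℚ) * 2 ^ k * _root_.bernoulli k
                  - 2 * (((2 * (j + 1) + 1).choose k : ℚ) * _root_.bernoulli k)) := by
          intro k hk
          have hk' : k ≤ 2 * j + 3 := by
            have := Nat.lt_succ_iff.mp (Finset.mem_range.mp hk); omega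
          rcases Nat.even_or_odd k with ⟨a, ha⟩ | ho
          · match a, ha with
            | 0, ha =>
              have hk0 : k = 0 := by omega
              subst hk0
              rw [qcsc_zero, show 2 * (j + 1) + 1 - 0 = 2 * (j + 1) + 1 from rfl, qss_odd,
                _root_.bernoulli_zero]
              simp only [Nat.choose_zero_right, Nat.cast_one, pow_zero, pow_succ]
              ring
            | (b + 1), ha =>
              have hble : b ≤ j := by omega
              have hk1 : k = 2 * (b + 1) := by omega
              subst hk1
              rw [show 2 * (j + 1) + 1 - 2 * (b + 1) = 2 * (j - b) + 1 from by omega, qss_odd,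
                qcsc, if_neg (by omega), if_pos ⟨b + 1, by ring⟩,
                show 2 * (b + 1) / 2 = b + 1 from by omega,
                show b + 1 - 1 = b from rfl,
                show ((4 : ℚ)) ^ (b + 1) = 2 ^ (2 * (b + 1)) from by
                  rw [show (4 : ℚ) = 2 ^ 2 from by norm_num, ← pow_mul]]
              have hsgn : (-1 : ℚ) ^ b * (-1 : ℚ) ^ (j - b) = (-1) ^ j := by
                rw [← pow_add, show b + (j - b) = j from by omega]
              rw [← hsgn]
              ring
          · rw [qcsc_odd k ho]
            rcases ho with ⟨c, hc⟩
            match c, hc with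
            | 0, hc =>
              have hk1 : k = 1 := by omega
              subst hk1
              rw [_root_.bernoulli_one]
              ring
            | (c + 1), hc =>
              rw [bernoulli_odd_zero ⟨c + 1, by omega⟩ (by omega)]
              ring
        rw [Finset.sum_congr rfl hterm, ← Finset.mul_sum]
        have hL2 := L2 (j + 1)
        have hL1 := L1' j
        rw [Finset.sum_sub_distrib, ← Finset.mul_sum]
        rw [show 2 * (j + 1) + 1 + 1 = 2 * j + 4 from by ring] at *
        rw [show 2 * (j + 1) + 1 = 2 * j + 3 from by ring] at *
        rw [hL2, hL1]
        ring
  rw [main]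
  split_ifs with h
  · subst h; norm_num
  · simp

lemma c2_ne : PowerSeries.rescale (2 : ℚ) (egf qcc) ≠ 0 := by
  intro h
  have := congrArg (PowerSeries.coeff 0) h
  rw [PowerSeries.coeff_rescale, coeff_egf] at this
  rw [show qcc 0 = 1 from by rw [show (0 : ℕ) = 2 * 0 from rfl, qcc_even]; norm_num] at this
  norm_num at this

lemma hsplit : (egf s - PowerSeries.rescale (-1 : ℚ) (egf s)) * PowerSeries.rescale (2:ℚ) (egf qcc)
    = egf qss + egf qss := by
  rw [F4]
  calc (egf s - PowerSeries.rescale (-1 : ℚ) (egf s))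
        * (egf (fun m => qcc m - qss m) * egf (fun m => qcc m + qss m))
      = (egf s * egf (fun m => qcc m - qss m)) * egf (fun m => qcc m + qss m)
        - (PowerSeries.rescale (-1 : ℚ) (egf s) * egf (fun m => qcc m + qss m))
          * egf (fun m => qcc m - qss m) := by ring
    _ = egf (fun m => qcc m + qss m) - egf (fun m => qcc m - qss m) := by
        rw [F1, F2, one_mul, one_mul]
    _ = egf qss + egf qss := hBA

lemma F7 : egf qcsc * (egf s - PowerSeries.rescale (-1 : ℚ) (egf s))
    = PowerSeries.X * PowerSeries.rescale (2 : ℚ) (egf ee)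
      + PowerSeries.X * PowerSeries.rescale (2 : ℚ) (egf ee) := by
  apply mul_right_cancel₀ c2_ne
  have hre : PowerSeries.rescale (2 : ℚ) (egf ee) * PowerSeries.rescale (2 : ℚ) (egf qcc)
      = 1 := by
    rw [← map_mul, F3, map_one]
  calc egf qcsc * (egf s - PowerSeries.rescale (-1 : ℚ) (egf s))
        * PowerSeries.rescale (2:ℚ) (egf qcc)
      = egf qcsc * ((egf s - PowerSeries.rescale (-1 : ℚ) (egf s))
          * PowerSeries.rescale (2:ℚ) (egf qcc)) := by ring
    _ = egf qcsc * (egf qss + egf qss) := by rw [hsplit]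
    _ = PowerSeries.X + PowerSeries.X := by rw [mul_add, F6]
    _ = (PowerSeries.X * PowerSeries.rescale (2 : ℚ) (egf ee)
          + PowerSeries.X * PowerSeries.rescale (2 : ℚ) (egf ee))
        * PowerSeries.rescale (2:ℚ) (egf qcc) := by
        calc PowerSeries.X + PowerSeries.X
            = PowerSeries.X * (PowerSeries.rescale (2 : ℚ) (egf ee)
                * PowerSeries.rescale (2 : ℚ) (egf qcc))
              + PowerSeries.X * (PowerSeries.rescale (2 : ℚ) (egf ee)
                * PowerSeries.rescale (2 : ℚ) (egf qcc)) := by rw [hre]; ring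
          _ = _ := by ring

lemma hflip (N : ℕ) :
    PowerSeries.coeff (2 * N + 1) (egf qcsc * PowerSeries.rescale (-1 : ℚ) (egf s))
      = - PowerSeries.coeff (2 * N + 1) (egf qcsc * egf s) := by
  rw [rescale_egf, egf_mul_coeff, egf_mul_coeff, ← neg_div, ← Finset.sum_neg_distrib]
  congr 1
  refine Finset.sum_congr rfl fun k hk => ?_
  have hk' : k ≤ 2 * N + 1 := Nat.lt_succ_iff.mp (Finset.mem_range.mp hk)
  rcases Nat.even_or_odd k with ⟨a, ha⟩ | ho
  · have : Odd (2 * N + 1 - k) := ⟨N - a, by omega⟩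
    rw [Odd.neg_one_pow this]
    ring
  · rw [qcsc_odd k ho]
    ring

lemma hcoeff (N : ℕ) :
    PowerSeries.coeff (2 * N + 1) (egf qcsc * egf s)
      = PowerSeries.coeff (2 * N + 1)
          (PowerSeries.X * PowerSeries.rescale (2 : ℚ) (egf ee)) := by
  have h := congrArg (PowerSeries.coeff (2 * N + 1)) F7
  rw [mul_sub, map_sub, map_add, hflip] at h
  linarith

theorem secant_eq_sum_springer_bernoulli (n : ℕ) :
    (2 * n + 1 : ℚ) * 2 ^ (2 * n) * E (2 * n) =
      s (2 * n + 1) +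
        ∑ i ∈ Finset.range n,
          ((2 * n + 1).choose (2 * i + 2) : ℚ) * (-1) ^ (i + 2) * (4 ^ (i + 1) - 2) *
            _root_.bernoulli (2 * i + 2) * s (2 * n - 2 * i - 1) := by
  have hco := hcoeff n
  rw [egf_mul_coeff, show 2 * n + 1 = (2 * n) + 1 from rfl, PowerSeries.coeff_succ_X_mul,
    PowerSeries.coeff_rescale, coeff_egf] at hco
  have hfac2 : (((2 * n).factorial : ℕ) : ℚ) ≠ 0 :=
    Nat.cast_ne_zero.mpr (Nat.factorial_ne_zero _)
  have hfacs : (((2 * n + 1).factorial : ℕ) : ℚ)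
      = (2 * n + 1 : ℚ) * ((2 * n).factorial : ℚ) := by
    rw [Nat.factorial_succ]
    push_cast
    ring
  have hS : (∑ k ∈ range (2 * n + 1 + 1), ((2 * n + 1).choose k : ℚ) * qcsc k
        * s (2 * n + 1 - k))
      = (2 * n + 1 : ℚ) * 2 ^ (2 * n) * ee (2 * n) := by
    have h1 : (((2 * n + 1).factorial : ℕ) : ℚ) ≠ 0 :=
      Nat.cast_ne_zero.mpr (Nat.factorial_ne_zero _)
    rw [div_eq_iff h1] at hco
    rw [hco, hfacs]
    field_simp
  rw [Finset.sum_range_succ'] at hS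
  have hzeroth : ((2 * n + 1).choose 0 : ℚ) * qcsc 0 * s (2 * n + 1 - 0) = s (2 * n + 1) := by
    rw [qcsc_zero]
    simp
  rw [hzeroth] at hS
  have hodd := sum_odd_only
    (fun k => ((2 * n + 1).choose (k + 1) : ℚ) * qcsc (k + 1) * s (2 * n + 1 - (k + 1)))
    (fun k hk => by
      rcases hk with ⟨a, ha⟩
      show ((2 * n + 1).choose (k + 1) : ℚ) * qcsc (k + 1) * s (2 * n + 1 - (k + 1)) = 0
      rw [qcsc_odd (k + 1) ⟨a, by omega⟩]
      ring) n
  rw [hodd] at hS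
  have hfinal : (∑ i ∈ range n,
      ((2 * n + 1).choose (2 * i + 1 + 1) : ℚ) * qcsc (2 * i + 1 + 1)
        * s (2 * n + 1 - (2 * i + 1 + 1)))
      = ∑ i ∈ Finset.range n,
          ((2 * n + 1).choose (2 * i + 2) : ℚ) * (-1) ^ (i + 2) * (4 ^ (i + 1) - 2) *
            _root_.bernoulli (2 * i + 2) * s (2 * n - 2 * i - 1) := by
    refine Finset.sum_congr rfl fun i hi => ?_
    have hi' : i < n := Finset.mem_range.mp hi
    rw [show 2 * i + 1 + 1 = 2 * i + 2 from rfl,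
      show 2 * n + 1 - (2 * i + 2) = 2 * n - 2 * i - 1 from by omega]
    rw [qcsc, if_neg (by omega), if_pos ⟨i + 1, by ring⟩,
      show (2 * i + 2) / 2 = i + 1 from by omega, show i + 1 - 1 = i from rfl]
    rw [show (-1 : ℚ) ^ (i + 2) = (-1) ^ i from by rw [pow_add]; norm_num]
    ring
  rw [hfinal] at hS
  have hE : E (2 * n) = ee (2 * n) := by
    unfold E ee
    rw [if_pos ⟨n, two_mul n⟩]
  rw [hE]
  linarith
end
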